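/- arXiv:1811.05707 — 11 statements merged into one kernel-verified Lean document; each statement's English description precedes it below -/
import Mathlib

section
/- For all integers k ≥ 1 and n ≥ 2k, s_{k,n} = \binom{n+2k-3}{n-2k}; that is, \sum_{i=k}^{n-k} \binom{i+k-2}{i-k} \binom{n-i+k-2}{n-i-k} = \binom{n+2k-3}{n-2k}. -/
/-- Hockey stick identity in the form needed. -/
lemma hockey (a m : ℕ) :
    ∑ j ∈ Finset.range (m + 1), Nat.choose (j + a) j = Nat.choose (m + a + 1) m := by
  induction m with
  | zero => simp
  | succ m ih =>
      rw [Finset.sum_range_succ, ih]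
      have h : Nat.choose (m + 1 + a + 1) (m + 1)
          = Nat.choose (m + a + 1) m + Nat.choose (m + a + 1) (m + 1) := by
        rw [show m + 1 + a + 1 = (m + a + 1) + 1 by omega]
        exact Nat.choose_succ_succ' _ _
      rw [h, show m + 1 + a = m + a + 1 by omega]

/-- Vandermonde-type convolution:
`∑_{j=0}^{m} C(j+a, j) C(m-j+b, m-j) = C(m+a+b+1, m)`. -/
lemma conv (a : ℕ) : ∀ b m : ℕ,
    ∑ j ∈ Finset.range (m + 1),
        Nat.choose (j + a) j * Nat.choose (m - j + b) (m - j)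
      = Nat.choose (m + a + b + 1) m := by
  intro b
  induction b with
  | zero =>
      intro m
      simpa using hockey a m
  | succ b ihb =>
      intro m
      induction m with
      | zero => simp
      | succ m ihm =>
          rw [Finset.sum_range_succ]
          have split : ∀ j ∈ Finset.range (m + 1),
              Nat.choose (j + a) j * Nat.choose (m + 1 - j + (b + 1)) (m + 1 - j)
              = Nat.choose (j + a) j * Nat.choose (m - j + (b + 1)) (m - j)
                + Nat.choose (j + a) j * Nat.choose (m + 1 - j + b) (m + 1 - j) := by
            intro j hj
            have hjm : j ≤ m := Nat.lt_succ_iff.mp (Finset.mem_range.mp hj)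
            have e1 : m + 1 - j + (b + 1) = (m - j + (b + 1)) + 1 := by omega
            have e2 : m + 1 - j = (m - j) + 1 := by omega
            rw [e1, e2, Nat.choose_succ_succ', Nat.mul_add,
              show m - j + 1 + b = m - j + (b + 1) by omega]
          rw [Finset.sum_congr rfl split, Finset.sum_add_distrib, ihm]
          have h2 : (∑ j ∈ Finset.range (m + 1),
                Nat.choose (j + a) j * Nat.choose (m + 1 - j + b) (m + 1 - j))
              + Nat.choose (m + 1 + a) (m + 1)
                * Nat.choose (m + 1 - (m + 1) + (b + 1)) (m + 1 - (m + 1))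
              = Nat.choose (m + 1 + a + b + 1) (m + 1) := by
            have h := ihb (m + 1)
            rw [Finset.sum_range_succ] at h
            simpa using h
          rw [add_assoc, h2]
          have hp : Nat.choose (m + 1 + a + (b + 1) + 1) (m + 1)
              = Nat.choose (m + a + b + 2) m + Nat.choose (m + a + b + 2) (m + 1) := by
            rw [show m + 1 + a + (b + 1) + 1 = (m + a + b + 2) + 1 by omega]
            exact Nat.choose_succ_succ' _ _
          rw [hp, show m + a + (b + 1) + 1 = m + a + b + 2 by omega,
            show m + 1 + a + b + 1 = m + a + b + 2 by omega]

/-- For `k ≥ 1` and `n ≥ 2k`, the number of directed plateau polycubes of width `k`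
and lateral area `n` is `s_{k,n} = C(n+2k-3, n-2k)`. -/
theorem directed_plateau_closed_form (k n : ℕ) (hk : 1 ≤ k) (hn : 2 * k ≤ n) :
    ∑ i ∈ Finset.Icc k (n - k),
        Nat.choose (i + k - 2) (i - k) * Nat.choose (n - i + k - 2) (n - i - k)
      = Nat.choose (n + 2 * k - 3) (n - 2 * k) := by
  set m := n - 2 * k with hm
  rw [← Finset.Ico_add_one_right_eq_Icc, Finset.sum_Ico_eq_sum_range,
    show n - k + 1 - k = m + 1 by omega]
  have hc : ∀ j ∈ Finset.range (m + 1),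
      Nat.choose (k + j + k - 2) (k + j - k) * Nat.choose (n - (k + j) + k - 2) (n - (k + j) - k)
      = Nat.choose (j + (2 * k - 2)) j * Nat.choose (m - j + (2 * k - 2)) (m - j) := by
    intro j hj
    have hjm : j ≤ m := Nat.lt_succ_iff.mp (Finset.mem_range.mp hj)
    congr 1 <;> congr 1 <;> omega
  rw [Finset.sum_congr rfl hc, conv (2 * k - 2) (2 * k - 2) m,
    show m + (2 * k - 2) + (2 * k - 2) + 1 = n + 2 * k - 3 by omega]
end

section
/- For every integer k ≥ 1, the identity (1-t)^{4k-2} · S_k(t) = t^{2k} holds in ℤ[[t]], where S_k(t) is the formal power series whose coefficient of t^n equals s_{k,n}. (Equivalently, the generating function of directed plateau polycubes of width k by lateral area is S_k(t) = t^{2k}/(1-t)^{4k-2}.) -/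
/-- `s k n` is the number of directed plateau polycubes of width `k` and lateral area `n`. -/
def dirPlateau (k n : ℕ) : ℕ :=
  ∑ i ∈ Finset.Icc k (n - k),
    Nat.choose (i + k - 2) (i - k) * Nat.choose (n - i + k - 2) (n - i - k)

open PowerSeries Finset

/-- Generating function of directed plateau polycubes of width `k` by lateral area:
`S_k(t) = t^{2k} / (1-t)^{4k-2}` in `ℤ⟦X⟧`, stated denominator-free. -/
theorem directed_plateau_gf (k : ℕ) (hk : 1 ≤ k) :
    (1 - PowerSeries.X : PowerSeries ℤ) ^ (4 * k - 2) *
        PowerSeries.mk (fun n => (dirPlateau k n : ℤ))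
      = PowerSeries.X ^ (2 * k) := by
  set d : ℕ := 2 * k - 2 with hd
  set B : PowerSeries ℤ := PowerSeries.mk fun n => ((d + n).choose d : ℤ) with hB
  set A : PowerSeries ℤ := B * PowerSeries.X ^ k with hAdef
  have hBinv : B * (1 - PowerSeries.X : PowerSeries ℤ) ^ (d + 1) = 1 :=
    PowerSeries.mk_add_choose_mul_one_sub_pow_eq_one ℤ d
  have hA : ∀ i, (PowerSeries.coeff i) A =
      if k ≤ i then ((i + k - 2).choose (i - k) : ℤ) else 0 := by
    intro i
    rw [hAdef, PowerSeries.coeff_mul_X_pow']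
    split_ifs with h
    · rw [hB, PowerSeries.coeff_mk]
      have h1 : d + (i - k) = i + k - 2 := by omega
      have h2 : i - k = (i + k - 2) - d := by omega
      have h3 : d ≤ i + k - 2 := by omega
      rw [h1, h2, Nat.choose_symm h3]
    · rfl
  have hmk : PowerSeries.mk (fun n => (dirPlateau k n : ℤ)) = A * A := by
    ext n
    rw [PowerSeries.coeff_mul, Finset.Nat.sum_antidiagonal_eq_sum_range_succ_mk,
      PowerSeries.coeff_mk]
    have hsub : Finset.Icc k (n - k) ⊆ Finset.range (n + 1) := by
      intro i hi
      simp only [Finset.mem_Icc] at hi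
      simp only [Finset.mem_range]
      omega
    rw [dirPlateau, Nat.cast_sum]
    rw [← Finset.sum_subset hsub]
    · refine Finset.sum_congr rfl fun i hi => ?_
      simp only [Finset.mem_Icc] at hi
      rw [hA, hA, if_pos hi.1, if_pos (by omega : k ≤ n - i)]
      push_cast
      ring
    · intro i hi hni
      simp only [Finset.mem_range] at hi
      simp only [Finset.mem_Icc, not_and_or, not_le] at hni
      rw [hA, hA]
      rcases hni with h | h
      · rw [if_neg (by omega), zero_mul]
      · rw [if_neg (by omega : ¬ k ≤ n - i), mul_zero]
  have h42 : 4 * k - 2 = 2 * (d + 1) := by omega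
  rw [hmk, h42, pow_mul']
  calc ((1 - PowerSeries.X : PowerSeries ℤ) ^ (d + 1)) ^ 2 * (A * A)
      = (B * (1 - PowerSeries.X) ^ (d + 1)) ^ 2 * (PowerSeries.X ^ k) ^ 2 := by
        rw [hAdef]; ring
    _ = PowerSeries.X ^ (2 * k) := by rw [hBinv, one_pow, one_mul, ← pow_mul, mul_comm k 2]
end

section
/- In the ring of formal power series in two variables x and t over ℤ, let S(x,t) be the series whose coefficient of x^k t^n equals s_{k,n} for k ≥ 1 and is 0 for k = 0 (this is well defined since s_{k,n} = 0 whenever n < 2k). Then S(x,t) · ((1-t)^4 - x t^2) = x t^2 (1-t)^2. -/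
/-- The two-variable generating function of directed plateau polycubes:
the coefficient of `x^k t^n` is `s_{k,n}` for `k ≥ 1`, and `0` for `k = 0`.
Here the variable `x` (coding the width) is `X 0` and `t` (coding the lateral area) is `X 1`. -/
noncomputable def dirPlateauGF : MvPowerSeries (Fin 2) ℤ :=
  fun d => if d 0 = 0 then 0 else (dirPlateau (d 0) (d 1) : ℤ)

/-! ### Auxiliary development -/

/-- Single summand coefficients. -/
def aC (k i : ℕ) : ℕ := if i < k then 0 else Nat.choose (i + k - 2) (i - k)

lemma dirPlateau_eq_sum (k n : ℕ) :
    dirPlateau k n = ∑ p ∈ Finset.HasAntidiagonal.antidiagonal n, aC k p.1 * aC k p.2 := by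
  rw [Finset.Nat.sum_antidiagonal_eq_sum_range_succ_mk, dirPlateau]
  have h1 : ∀ i ∈ Finset.Icc k (n - k),
      Nat.choose (i + k - 2) (i - k) * Nat.choose (n - i + k - 2) (n - i - k)
        = aC k i * aC k (n - i) := by
    intro i hi
    rw [Finset.mem_Icc] at hi
    rw [aC, aC, if_neg (by omega), if_neg (by omega)]
  rw [Finset.sum_congr rfl h1]
  apply Finset.sum_subset
  · intro i hi
    rw [Finset.mem_Icc] at hi
    rw [Finset.mem_range]
    omega
  · intro i hi hni
    rw [Finset.mem_range] at hi
    rw [Finset.mem_Icc] at hni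
    by_cases h : i < k
    · have hz : aC k i = 0 := by rw [aC, if_pos h]
      rw [hz, zero_mul]
    · have hz : aC k (n - i) = 0 := by rw [aC, if_pos (show n - i < k by omega)]
      rw [hz, mul_zero]

noncomputable def Qser (k : ℕ) : PowerSeries ℤ := PowerSeries.mk fun i => (aC k i : ℤ)

noncomputable def Pser (k : ℕ) : PowerSeries ℤ := PowerSeries.mk fun n => (dirPlateau k n : ℤ)

lemma Pser_eq (k : ℕ) : Pser k = Qser k * Qser k := by
  ext n
  rw [Pser, PowerSeries.coeff_mk, PowerSeries.coeff_mul]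
  simp only [Qser, PowerSeries.coeff_mk]
  rw [dirPlateau_eq_sum]
  push_cast
  rfl

lemma Qser_mul (j : ℕ) :
    Qser (j + 1) * (1 - PowerSeries.X) ^ (2 * j + 1) = PowerSeries.X ^ (j + 1) := by
  have hu := PowerSeries.invOneSubPow_val_eq_mk_sub_one_add_choose_of_pos (S := ℤ)
    (d := 2 * j + 1) (by omega)
  have hinv := PowerSeries.invOneSubPow_inv_eq_one_sub_pow (S := ℤ) (d := 2 * j + 1)
  have hQ : Qser (j + 1)
      = PowerSeries.X ^ (j + 1) * (PowerSeries.invOneSubPow ℤ (2 * j + 1)).val := by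
    rw [hu]
    ext i
    rw [PowerSeries.coeff_X_pow_mul']
    simp only [Qser, PowerSeries.coeff_mk]
    by_cases h : j + 1 ≤ i
    · rw [if_pos h, aC, if_neg (by omega)]
      have h1 : i + (j + 1) - 2 = 2 * j + 1 - 1 + (i - (j + 1)) := by omega
      rw [h1]
      norm_cast
      have h2 := Nat.choose_symm (n := 2 * j + 1 - 1 + (i - (j + 1))) (k := i - (j + 1))
        (by omega)
      have h3 : 2 * j + 1 - 1 + (i - (j + 1)) - (i - (j + 1)) = 2 * j + 1 - 1 := by omega
      rw [h3] at h2
      exact h2.symm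
    · rw [if_neg h, aC, if_pos (by omega)]
      norm_num
  rw [hQ, ← hinv, mul_assoc, (PowerSeries.invOneSubPow ℤ (2 * j + 1)).val_inv, mul_one]

lemma Pser_mul (j : ℕ) :
    Pser (j + 1) * (1 - PowerSeries.X) ^ (4 * j + 2) = PowerSeries.X ^ (2 * j + 2) := by
  rw [Pser_eq]
  have h := Qser_mul j
  linear_combination (Qser (j + 1) * (1 - PowerSeries.X) ^ (2 * j + 1)
    + PowerSeries.X ^ (j + 1)) * h

/-- The "coefficient of `x^k`" transfer map to one-variable power series. -/
noncomputable def Phi (k : ℕ) (F : MvPowerSeries (Fin 2) ℤ) : PowerSeries ℤ :=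
  PowerSeries.mk fun n =>
    MvPowerSeries.coeff (Finsupp.single 0 k + Finsupp.single 1 n) F

lemma Phi_sub (k : ℕ) (F G : MvPowerSeries (Fin 2) ℤ) :
    Phi k (F - G) = Phi k F - Phi k G := by
  ext n
  simp [Phi]

lemma Phi_mul_X1pow (k j : ℕ) (F : MvPowerSeries (Fin 2) ℤ) :
    Phi k (F * MvPowerSeries.X 1 ^ j) = Phi k F * PowerSeries.X ^ j := by
  ext n
  rw [PowerSeries.coeff_mul_X_pow']
  simp only [Phi, PowerSeries.coeff_mk]
  rw [MvPowerSeries.X_pow_eq, MvPowerSeries.coeff_mul_monomial]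
  have happ : ((Finsupp.single (0 : Fin 2) k + Finsupp.single (1 : Fin 2) n : Fin 2 →₀ ℕ)) 1 = n := by
    simp [Finsupp.single_apply]
  by_cases h : j ≤ n
  · rw [if_pos (by rw [Finsupp.single_le_iff, happ]; exact h), if_pos h, mul_one]
    have hsub : (Finsupp.single (0 : Fin 2) k + Finsupp.single (1 : Fin 2) n : Fin 2 →₀ ℕ)
        - Finsupp.single (1 : Fin 2) j
        = Finsupp.single (0 : Fin 2) k + Finsupp.single (1 : Fin 2) (n - j) := by
      ext i
      fin_cases i <;> simp [Finsupp.tsub_apply, Finsupp.single_apply]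
    rw [hsub]
  · rw [if_neg ?_, if_neg h]
    intro hc
    rw [Finsupp.single_le_iff, happ] at hc
    exact h hc

lemma Phi_mul_X0_succ (k : ℕ) (F : MvPowerSeries (Fin 2) ℤ) :
    Phi (k + 1) (F * MvPowerSeries.X 0) = Phi k F := by
  ext n
  simp only [Phi, PowerSeries.coeff_mk]
  rw [MvPowerSeries.X_def, MvPowerSeries.coeff_mul_monomial]
  have happ : ((Finsupp.single (0 : Fin 2) (k + 1) + Finsupp.single (1 : Fin 2) n : Fin 2 →₀ ℕ)) 0
      = k + 1 := by
    simp [Finsupp.single_apply]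
  rw [if_pos (by rw [Finsupp.single_le_iff, happ]; omega), mul_one]
  have hsub : (Finsupp.single (0 : Fin 2) (k + 1) + Finsupp.single (1 : Fin 2) n : Fin 2 →₀ ℕ)
      - Finsupp.single (0 : Fin 2) 1
      = Finsupp.single (0 : Fin 2) k + Finsupp.single (1 : Fin 2) n := by
    ext i
    fin_cases i <;> simp [Finsupp.tsub_apply, Finsupp.single_apply]
  rw [hsub]

lemma Phi_mul_X0_zero (F : MvPowerSeries (Fin 2) ℤ) :
    Phi 0 (F * MvPowerSeries.X 0) = 0 := by
  ext n
  simp only [Phi, PowerSeries.coeff_mk]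
  rw [MvPowerSeries.X_def, MvPowerSeries.coeff_mul_monomial]
  have happ : ((Finsupp.single (0 : Fin 2) 0 + Finsupp.single (1 : Fin 2) n : Fin 2 →₀ ℕ)) 0
      = 0 := by
    simp [Finsupp.single_apply]
  rw [if_neg ?_]
  · simp
  · intro hc
    rw [Finsupp.single_le_iff, happ] at hc
    omega

lemma Phi_mul_oneSub (k : ℕ) (F : MvPowerSeries (Fin 2) ℤ) :
    Phi k (F * (1 - MvPowerSeries.X 1)) = Phi k F * (1 - PowerSeries.X) := by
  have h : F * (1 - MvPowerSeries.X 1) = F - F * MvPowerSeries.X 1 ^ 1 := by ring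
  rw [h, Phi_sub, Phi_mul_X1pow]
  ring

lemma Phi_one_zero : Phi 0 (1 : MvPowerSeries (Fin 2) ℤ) = 1 := by
  ext n
  simp only [Phi, PowerSeries.coeff_mk, MvPowerSeries.coeff_one, PowerSeries.coeff_one]
  simp [Finsupp.single_eq_zero]

lemma Phi_one_succ (k : ℕ) : Phi (k + 1) (1 : MvPowerSeries (Fin 2) ℤ) = 0 := by
  ext n
  simp only [Phi, PowerSeries.coeff_mk, MvPowerSeries.coeff_one]
  rw [if_neg ?_]
  · simp
  · intro hc
    have := congrArg (fun f => f (0 : Fin 2)) hc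
    simp [Finsupp.single_apply] at this

lemma coeff_GF (d : Fin 2 →₀ ℕ) :
    MvPowerSeries.coeff d dirPlateauGF
      = if d 0 = 0 then 0 else (dirPlateau (d 0) (d 1) : ℤ) := rfl

lemma Phi_GF_zero : Phi 0 dirPlateauGF = 0 := by
  ext n
  simp only [Phi, PowerSeries.coeff_mk, coeff_GF]
  rw [if_pos (by simp [Finsupp.single_apply])]
  simp

lemma Phi_GF_succ (k : ℕ) : Phi (k + 1) dirPlateauGF = Pser (k + 1) := by
  ext n
  simp only [Phi, PowerSeries.coeff_mk, coeff_GF, Pser]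
  have h0 : ((Finsupp.single (0 : Fin 2) (k + 1) + Finsupp.single (1 : Fin 2) n : Fin 2 →₀ ℕ)) 0
      = k + 1 := by
    simp [Finsupp.single_apply]
  have h1 : ((Finsupp.single (0 : Fin 2) (k + 1) + Finsupp.single (1 : Fin 2) n : Fin 2 →₀ ℕ)) 1
      = n := by
    simp [Finsupp.single_apply]
  rw [h0, h1, if_neg (by omega)]

lemma main_key (k : ℕ) :
    Phi k (dirPlateauGF *
        ((1 - MvPowerSeries.X 1) ^ 4 - MvPowerSeries.X 0 * (MvPowerSeries.X 1) ^ 2))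
      = Phi k (MvPowerSeries.X 0 * (MvPowerSeries.X 1) ^ 2 * (1 - MvPowerSeries.X 1) ^ 2) := by
  have hL : dirPlateauGF *
        ((1 - MvPowerSeries.X 1) ^ 4 - MvPowerSeries.X 0 * (MvPowerSeries.X 1) ^ 2)
      = ((((dirPlateauGF * (1 - MvPowerSeries.X 1)) * (1 - MvPowerSeries.X 1))
            * (1 - MvPowerSeries.X 1)) * (1 - MvPowerSeries.X 1))
        - (dirPlateauGF * MvPowerSeries.X 1 ^ 2) * MvPowerSeries.X 0 := by ring
  have hR : (MvPowerSeries.X 0 : MvPowerSeries (Fin 2) ℤ) * (MvPowerSeries.X 1) ^ 2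
        * (1 - MvPowerSeries.X 1) ^ 2
      = ((((1 : MvPowerSeries (Fin 2) ℤ) * MvPowerSeries.X 1 ^ 2) * (1 - MvPowerSeries.X 1))
          * (1 - MvPowerSeries.X 1)) * MvPowerSeries.X 0 := by ring
  rw [hL, hR, Phi_sub, Phi_mul_oneSub, Phi_mul_oneSub, Phi_mul_oneSub, Phi_mul_oneSub]
  match k with
  | 0 =>
    rw [Phi_GF_zero, Phi_mul_X0_zero, Phi_mul_X0_zero]
    ring
  | 1 =>
    rw [Phi_GF_succ 0, Phi_mul_X0_succ, Phi_mul_X1pow, Phi_GF_zero,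
      Phi_mul_X0_succ, Phi_mul_oneSub, Phi_mul_oneSub, Phi_mul_X1pow, Phi_one_zero]
    have h := Pser_mul 0
    linear_combination (1 - PowerSeries.X) ^ 2 * h
  | (j + 2) =>
    rw [Phi_GF_succ (j + 1), Phi_mul_X0_succ, Phi_mul_X1pow, Phi_GF_succ j,
      Phi_mul_X0_succ, Phi_mul_oneSub, Phi_mul_oneSub, Phi_mul_X1pow, Phi_one_succ]
    have h1 := Pser_mul (j + 1)
    have h2 := Pser_mul j
    have hone : (1 - PowerSeries.X : PowerSeries ℤ) ≠ 0 := by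
      intro h
      have := congrArg (PowerSeries.constantCoeff) h
      simp at this
    apply mul_right_cancel₀ (pow_ne_zero (4 * j + 2) hone)
    linear_combination h1 - PowerSeries.X ^ 2 * h2

lemma coeff_eq_Phi (k n : ℕ) (F : MvPowerSeries (Fin 2) ℤ) :
    MvPowerSeries.coeff (Finsupp.single 0 k + Finsupp.single 1 n) F
      = PowerSeries.coeff n (Phi k F) := by
  rw [Phi, PowerSeries.coeff_mk]

/-- `S(x,t) · ((1-t)⁴ - x t²) = x t² (1-t)²` in `ℤ[[x,t]]`; equivalently,
`S(x,t) = x t² (1-t)² / ((1-t)⁴ - x t²)`. -/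
theorem directed_plateau_gf_two_variables :
    dirPlateauGF *
        ((1 - MvPowerSeries.X 1) ^ 4 - MvPowerSeries.X 0 * (MvPowerSeries.X 1) ^ 2)
      = MvPowerSeries.X 0 * (MvPowerSeries.X 1) ^ 2 * (1 - MvPowerSeries.X 1) ^ 2 := by
  apply MvPowerSeries.ext
  intro d
  have hd : d = Finsupp.single 0 (d 0) + Finsupp.single 1 (d 1) := by
    ext i
    fin_cases i <;> simp [Finsupp.single_apply]
  rw [hd, coeff_eq_Phi, coeff_eq_Phi, main_key]
end

section
/- Let S(t) be the formal power series in ℤ[[t]] whose coefficient of t^n equals \sum_{k=1}^{n} s_{k,n} (a finite sum, since s_{k,n} = 0 whenever n < 2k). Then S(t) · ((1-t)^4 - t^2) = t^2 (1-t)^2; that is, the generating function of directed plateau polycubes according to the lateral area is S(t) = t^2(1-t)^2 / ((1-t)^4 - t^2). -/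
open PowerSeries Finset

/-- `Bser k = X^k / (1-X)^(2k-1)`, the width-`k` column generating function. -/
noncomputable def Bser (k : ℕ) : PowerSeries ℤ :=
  ((PowerSeries.invOneSubPow ℤ (2 * k - 1) : (PowerSeries ℤ)ˣ) : PowerSeries ℤ) *
    PowerSeries.X ^ k

lemma one_sub_X_ne_zero : (1 - PowerSeries.X : PowerSeries ℤ) ≠ 0 := by
  intro h
  have := congrArg (PowerSeries.coeff 0) h
  simp at this

lemma inv_mul_one_sub_pow (d : ℕ) :
    ((PowerSeries.invOneSubPow ℤ d : (PowerSeries ℤ)ˣ) : PowerSeries ℤ) *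
      (1 - PowerSeries.X) ^ d = 1 := by
  rw [← PowerSeries.invOneSubPow_inv_eq_one_sub_pow]
  exact (PowerSeries.invOneSubPow ℤ d).val_inv

lemma coeff_Bser (k n : ℕ) (hk : 1 ≤ k) :
    (PowerSeries.coeff n) (Bser k) =
      if k ≤ n then ((n + k - 2).choose (n - k) : ℤ) else 0 := by
  have h2 : 2 * k - 1 = (2 * k - 2) + 1 := by omega
  rw [Bser, h2, PowerSeries.invOneSubPow_val_succ_eq_mk_add_choose,
    PowerSeries.coeff_mul_X_pow', PowerSeries.coeff_mk]
  by_cases h : k ≤ n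
  · rw [if_pos h, if_pos h]
    have e1 : 2 * k - 2 + (n - k) = n + k - 2 := by omega
    have e2 : n + k - 2 - (2 * k - 2) = n - k := by omega
    have e3 : 2 * k - 2 ≤ n + k - 2 := by omega
    rw [e1]
    rw [← Nat.choose_symm e3, e2]
  · rw [if_neg h, if_neg h]

lemma Bser_step (k : ℕ) (hk : 1 ≤ k) :
    Bser (k + 1) * (1 - PowerSeries.X) ^ 2 = Bser k * PowerSeries.X := by
  apply mul_right_cancel₀ (pow_ne_zero (2 * k - 1) one_sub_X_ne_zero)
  have hpow : ((1 : PowerSeries ℤ) - PowerSeries.X) ^ 2 *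
      (1 - PowerSeries.X) ^ (2 * k - 1) = (1 - PowerSeries.X) ^ (2 * (k + 1) - 1) := by
    rw [← pow_add]; congr 1; omega
  calc Bser (k + 1) * (1 - PowerSeries.X) ^ 2 * (1 - PowerSeries.X) ^ (2 * k - 1)
      = ((PowerSeries.invOneSubPow ℤ (2 * (k + 1) - 1) : (PowerSeries ℤ)ˣ) : PowerSeries ℤ) *
          ((1 - PowerSeries.X) ^ 2 * (1 - PowerSeries.X) ^ (2 * k - 1)) *
          PowerSeries.X ^ (k + 1) := by rw [Bser]; ring
    _ = PowerSeries.X ^ (k + 1) := by rw [hpow, inv_mul_one_sub_pow, one_mul]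
    _ = ((PowerSeries.invOneSubPow ℤ (2 * k - 1) : (PowerSeries ℤ)ˣ) : PowerSeries ℤ) *
          (1 - PowerSeries.X) ^ (2 * k - 1) * PowerSeries.X ^ (k + 1) := by
        rw [inv_mul_one_sub_pow, one_mul]
    _ = Bser k * PowerSeries.X * (1 - PowerSeries.X) ^ (2 * k - 1) := by
        rw [Bser]; ring

lemma Bser_one_mul : Bser 1 * (1 - PowerSeries.X) = PowerSeries.X := by
  have h := inv_mul_one_sub_pow 1
  calc Bser 1 * (1 - PowerSeries.X)
      = ((PowerSeries.invOneSubPow ℤ (2 * 1 - 1) : (PowerSeries ℤ)ˣ) : PowerSeries ℤ) *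
          (1 - PowerSeries.X) ^ 1 * PowerSeries.X ^ 1 := by rw [Bser]; ring
    _ = PowerSeries.X := by
        norm_num
        rw [pow_one] at h
        exact h

lemma telescope (K : ℕ) (hK : 1 ≤ K) :
    (∑ k ∈ Finset.Icc 1 K, Bser k ^ 2) *
        ((1 - PowerSeries.X) ^ 4 - PowerSeries.X ^ 2)
      = PowerSeries.X ^ 2 * (1 - PowerSeries.X) ^ 2 - Bser K ^ 2 * PowerSeries.X ^ 2 := by
  induction K, hK using Nat.le_induction with
  | base =>
    rw [Finset.Icc_self, Finset.sum_singleton]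
    have h1 : Bser 1 ^ 2 * (1 - PowerSeries.X) ^ 4
        = PowerSeries.X ^ 2 * (1 - PowerSeries.X) ^ 2 := by
      calc Bser 1 ^ 2 * (1 - PowerSeries.X) ^ 4
          = (Bser 1 * (1 - PowerSeries.X)) ^ 2 * (1 - PowerSeries.X) ^ 2 := by ring
        _ = PowerSeries.X ^ 2 * (1 - PowerSeries.X) ^ 2 := by rw [Bser_one_mul]
    linear_combination h1
  | succ K hK ih =>
    rw [Finset.sum_Icc_succ_top (by omega : 1 ≤ K + 1)]
    have h2 : Bser (K + 1) ^ 2 * (1 - PowerSeries.X) ^ 4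
        = Bser K ^ 2 * PowerSeries.X ^ 2 := by
      calc Bser (K + 1) ^ 2 * (1 - PowerSeries.X) ^ 4
          = (Bser (K + 1) * (1 - PowerSeries.X) ^ 2) ^ 2 := by ring
        _ = (Bser K * PowerSeries.X) ^ 2 := by rw [Bser_step K hK]
        _ = Bser K ^ 2 * PowerSeries.X ^ 2 := by ring
    linear_combination ih + h2

lemma coeff_Bser_sq_X_sq (K n : ℕ) (h : n < 2 * K + 2) :
    (PowerSeries.coeff n) (Bser K ^ 2 * PowerSeries.X ^ 2) = 0 := by
  have e : Bser K ^ 2 * PowerSeries.X ^ 2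
      = ((PowerSeries.invOneSubPow ℤ (2 * K - 1) : (PowerSeries ℤ)ˣ) : PowerSeries ℤ) ^ 2 *
          PowerSeries.X ^ (2 * K + 2) := by
    rw [Bser, mul_pow, ← pow_mul, mul_assoc, ← pow_add]
    congr 2
    omega
  rw [e, PowerSeries.coeff_mul_X_pow', if_neg (by omega)]

lemma coeff_Bser_sq (k n : ℕ) (hk : 1 ≤ k) :
    (PowerSeries.coeff n) (Bser k ^ 2) = (dirPlateau k n : ℤ) := by
  rw [sq, PowerSeries.coeff_mul, Finset.Nat.sum_antidiagonal_eq_sum_range_succ_mk]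
  simp only [coeff_Bser _ _ hk]
  rw [dirPlateau]
  push_cast
  rw [← Finset.sum_subset (s₁ := Finset.Icc k (n - k)) (s₂ := Finset.range (n + 1))]
  · apply Finset.sum_congr rfl
    intro i hi
    rw [Finset.mem_Icc] at hi
    rw [if_pos hi.1, if_pos (by omega : k ≤ n - i)]
  · intro i hi
    rw [Finset.mem_Icc] at hi
    rw [Finset.mem_range]
    omega
  · intro i hi hni
    rw [Finset.mem_range] at hi
    rw [Finset.mem_Icc] at hni
    rcases (by omega : i < k ∨ ¬ k ≤ n - i) with h | h
    · rw [if_neg (by omega), zero_mul]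
    · rw [if_neg h, mul_zero]

/-- The generating function of directed plateau polycubes by lateral area is
`S(t) = t²(1-t)² / ((1-t)⁴ - t²)` in `ℤ[[t]]`, stated denominator-free. -/
theorem directed_plateau_gf_total :
    (PowerSeries.mk (fun n => ((∑ k ∈ Finset.Icc 1 n, dirPlateau k n : ℕ) : ℤ))) *
        ((1 - PowerSeries.X) ^ 4 - PowerSeries.X ^ 2)
      = PowerSeries.X ^ 2 * (1 - PowerSeries.X) ^ 2 := by
  ext n
  have hST : ∀ p ≤ n,
      (PowerSeries.coeff p)
        (PowerSeries.mk (fun m => ((∑ k ∈ Finset.Icc 1 m, dirPlateau k m : ℕ) : ℤ)))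
      = (PowerSeries.coeff p) (∑ k ∈ Finset.Icc 1 (n + 1), Bser k ^ 2) := by
    intro p hp
    rw [PowerSeries.coeff_mk, map_sum]
    have : ∀ k ∈ Finset.Icc 1 (n + 1),
        (PowerSeries.coeff p) (Bser k ^ 2) = (dirPlateau k p : ℤ) := by
      intro k hk
      rw [Finset.mem_Icc] at hk
      exact coeff_Bser_sq k p hk.1
    rw [Finset.sum_congr rfl this]
    push_cast
    apply Finset.sum_subset
    · intro k hk
      rw [Finset.mem_Icc] at hk ⊢
      omega
    · intro k hk hnk
      rw [Finset.mem_Icc] at hk hnk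
      have hempty : Finset.Icc k (p - k) = ∅ := by
        apply Finset.Icc_eq_empty
        omega
      rw [dirPlateau, hempty, Finset.sum_empty, Nat.cast_zero]
  calc (PowerSeries.coeff n)
        ((PowerSeries.mk (fun m => ((∑ k ∈ Finset.Icc 1 m, dirPlateau k m : ℕ) : ℤ))) *
          ((1 - PowerSeries.X) ^ 4 - PowerSeries.X ^ 2))
      = (PowerSeries.coeff n) ((∑ k ∈ Finset.Icc 1 (n + 1), Bser k ^ 2) *
          ((1 - PowerSeries.X) ^ 4 - PowerSeries.X ^ 2)) := by
        rw [PowerSeries.coeff_mul, PowerSeries.coeff_mul]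
        apply Finset.sum_congr rfl
        intro p hp
        rw [hST p.1 (Finset.HasAntidiagonal.antidiagonal.fst_le hp)]
    _ = (PowerSeries.coeff n)
          (PowerSeries.X ^ 2 * (1 - PowerSeries.X) ^ 2 -
            Bser (n + 1) ^ 2 * PowerSeries.X ^ 2) := by
        rw [telescope (n + 1) (by omega)]
    _ = (PowerSeries.coeff n) (PowerSeries.X ^ 2 * (1 - PowerSeries.X) ^ 2) := by
        rw [map_sub, coeff_Bser_sq_X_sq (n + 1) n (by omega), sub_zero]
end

section
/- For every integer k ≥ 1, the identity (1-p)^{2k-1} · H_k(p) = p^k · \sum_{i=0}^{k-1} D(k-1-i, i) p^i holds in ℤ[[p]], where H_k(p) is the formal power series whose coefficient of p^n equals h_{k,n}. (Equivalently, the generating function of column-convex polyominoes with exactly k columns according to the area is p^k/(1-p)^{2k-1} · \sum_{i=0}^{k-1} D_{k-i-1,i} p^i.) -/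
/-- Integer binomial coefficient with the convention
`C(a,b) = a!/(b!(a-b)!)` if `0 ≤ b ≤ a` and `C(a,b) = 0` otherwise. -/
def ichoose (a b : ℤ) : ℤ := if 0 ≤ b ∧ b ≤ a then (a.toNat.choose b.toNat : ℤ) else 0

/-- The Delannoy numbers `D(n,m) = ∑_{k=0}^m C(m,k) C(n+m-k, m)`. -/
def delannoy (n m : ℕ) : ℕ :=
  ∑ k ∈ Finset.range (m + 1), Nat.choose m k * Nat.choose (n + m - k) m

/-- `h k n = ∑_{i=0}^{k-1} D(k-1-i, i) C(n-i+k-2, 2k-2)` is the number of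
column-convex polyominoes with `k` columns and area `n`. -/
def ccPoly (k n : ℕ) : ℤ :=
  ∑ i ∈ Finset.range k,
    (delannoy (k - 1 - i) i : ℤ) * ichoose ((n : ℤ) - i + k - 2) (2 * (k : ℤ) - 2)

/-- `r k m = ∑_{i=k}^{m-k} h_{k,i} h_{k,m-i}` is the number of plateau polycubes
of width `k` and lateral area `m`. -/
def plateau (k m : ℕ) : ℤ :=
  ∑ i ∈ Finset.Icc k (m - k), ccPoly k i * ccPoly k (m - i)

open PowerSeries in
lemma mk_ichoose (m c : ℕ) :
    (PowerSeries.mk fun n : ℕ => ichoose ((n : ℤ) - c + m) m)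
      = X ^ c * PowerSeries.mk (fun n : ℕ => (Nat.choose (m + n) m : ℤ)) := by
  ext n
  rw [coeff_mk, coeff_X_pow_mul']
  split_ifs with h
  · rw [coeff_mk, ichoose, if_pos]
    · congr 1
      have h1 : ((n : ℤ) - c + m).toNat = m + (n - c) := by omega
      rw [h1]
      simp
    · constructor <;> omega
  · rw [ichoose, if_neg]
    omega

open PowerSeries in
lemma key (m c : ℕ) :
    (1 - X : ℤ⟦X⟧) ^ (m + 1) * (PowerSeries.mk fun n : ℕ => ichoose ((n : ℤ) - c + m) m)
      = X ^ c := by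
  rw [mk_ichoose, mul_left_comm, mul_comm ((1 - X : ℤ⟦X⟧) ^ (m + 1)),
    mk_add_choose_mul_one_sub_pow_eq_one, mul_one]

/-- The generating function of column-convex polyominoes with exactly `k` columns by area is
`H_k(p) = p^k/(1-p)^{2k-1} · ∑_{i=0}^{k-1} D_{k-1-i,i} pⁱ` in `ℤ[[p]]`, stated denominator-free. -/
theorem column_convex_gf (k : ℕ) (hk : 1 ≤ k) :
    (1 - PowerSeries.X : PowerSeries ℤ) ^ (2 * k - 1) * PowerSeries.mk (fun n => ccPoly k n)
      = PowerSeries.X ^ k *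
          ∑ i ∈ Finset.range k, (delannoy (k - 1 - i) i : PowerSeries ℤ) * PowerSeries.X ^ i := by
  have hmk : (PowerSeries.mk fun n => ccPoly k n)
      = ∑ i ∈ Finset.range k, (delannoy (k - 1 - i) i : PowerSeries ℤ) *
          PowerSeries.mk (fun n : ℕ => ichoose ((n : ℤ) - ((k + i : ℕ) : ℤ) + (2 * k - 2 : ℕ)) (2 * k - 2 : ℕ)) := by
    ext n
    rw [PowerSeries.coeff_mk, ccPoly, map_sum]
    refine Finset.sum_congr rfl fun i hi => ?_
    rw [← map_natCast (PowerSeries.C (R := ℤ)) (delannoy (k - 1 - i) i), PowerSeries.coeff_C_mul,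
      PowerSeries.coeff_mk]
    congr 2
    · push_cast [Nat.cast_sub (by omega : 2 ≤ 2 * k)]
      ring
    · push_cast [Nat.cast_sub (by omega : 2 ≤ 2 * k)]
      ring
  have h21 : 2 * k - 1 = (2 * k - 2) + 1 := by omega
  rw [hmk, Finset.mul_sum, Finset.mul_sum]
  refine Finset.sum_congr rfl fun i hi => ?_
  rw [mul_left_comm, h21, key (2 * k - 2) (k + i), pow_add, mul_comm]
  ring
end

section
/- For every integer k ≥ 1, the identity (1-p)^{4k-2} · R_k(p) = p^{2k} · (\sum_{i=0}^{k-1} D(k-1-i, i) p^i)^2 holds in ℤ[[p]], where R_k(p) is the formal power series whose coefficient of p^m equals r_{k,m}. (Equivalently, the generating function of plateau polycubes of width k according to the lateral area satisfies R_k(p) = C_{k-1}(p)^2, where C_k(p) = p^{k+1}/(1-p)^{2k+1} · \sum_{i=0}^{k} D(k-i, i) p^i.) -/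
open PowerSeries Finset in
lemma ccPoly_eq_zero {k n : ℕ} (hk : 1 ≤ k) (hn : n < k) : ccPoly k n = 0 := by
  unfold ccPoly
  refine Finset.sum_eq_zero fun i hi => ?_
  rw [ichoose, if_neg, mul_zero]
  rintro ⟨h1, h2⟩
  simp only [Finset.mem_range] at hi
  omega

open PowerSeries Finset in
lemma mk_ccPoly_eq (k : ℕ) (hk : 1 ≤ k) :
    (mk (fun n => ccPoly k n) : ℤ⟦X⟧)
      = (∑ i ∈ Finset.range k, (delannoy (k - 1 - i) i : ℤ⟦X⟧) * X ^ (k + i)) *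
          (invOneSubPow ℤ (2 * k - 1)).val := by
  ext n
  rw [coeff_mk, Finset.sum_mul, map_sum, ccPoly]
  refine Finset.sum_congr rfl fun i hi => ?_
  simp only [Finset.mem_range] at hi
  have hpos : 0 < 2 * k - 1 := by omega
  rw [invOneSubPow_val_eq_mk_sub_one_add_choose_of_pos _ _ hpos]
  rw [show ((delannoy (k - 1 - i) i : ℤ⟦X⟧)) = C ((delannoy (k - 1 - i) i : ℤ)) by
    simp [map_natCast], mul_assoc, coeff_C_mul, coeff_X_pow_mul', coeff_mk]
  congr 1
  rw [ichoose]
  by_cases h : k + i ≤ n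
  · rw [if_pos (by constructor <;> omega), if_pos h]
    have h1 : ((n : ℤ) - i + k - 2).toNat = 2 * k - 1 - 1 + (n - (k + i)) := by omega
    have h2 : (2 * (k : ℤ) - 2).toNat = 2 * k - 1 - 1 := by omega
    rw [h1, h2]
  · rw [if_neg (by rintro ⟨a, b⟩; omega), if_neg h]

open PowerSeries Finset in
lemma plateau_gf_key (k : ℕ) (hk : 1 ≤ k) :
    (1 - X : ℤ⟦X⟧) ^ (2 * k - 1) * mk (fun n => ccPoly k n)
      = X ^ k * ∑ i ∈ Finset.range k, (delannoy (k - 1 - i) i : ℤ⟦X⟧) * X ^ i := by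
  rw [mk_ccPoly_eq k hk, ← mul_assoc, mul_comm ((1 - X : ℤ⟦X⟧) ^ (2 * k - 1)), mul_assoc,
    ← invOneSubPow_inv_eq_one_sub_pow, (invOneSubPow ℤ (2 * k - 1)).inv_val, mul_one,
    Finset.mul_sum]
  refine Finset.sum_congr rfl fun i _ => ?_
  rw [pow_add]; ring

open PowerSeries Finset in
lemma mk_plateau_eq (k : ℕ) (hk : 1 ≤ k) :
    (mk (fun m => plateau k m) : ℤ⟦X⟧) = (mk (fun n => ccPoly k n)) ^ 2 := by
  ext m
  rw [coeff_mk, sq, coeff_mul, Finset.Nat.sum_antidiagonal_eq_sum_range_succ_mk, plateau]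
  simp only [coeff_mk]
  apply Finset.sum_subset
  · intro x hx
    simp only [Finset.mem_range, Finset.mem_Icc] at *
    omega
  · intro i hi hni
    simp only [Finset.mem_range, Finset.mem_Icc] at hi hni
    by_cases h : i < k
    · rw [ccPoly_eq_zero hk h, zero_mul]
    · rw [ccPoly_eq_zero hk (show m - i < k by omega), mul_zero]

/-- The generating function of plateau polycubes of width `k` by lateral area satisfies
`(1-p)^{4k-2} R_k(p) = p^{2k} (∑_{i=0}^{k-1} D_{k-1-i,i} pⁱ)²` in `ℤ[[p]]`;
equivalently `R_k(p) = C_{k-1}(p)²` with `C_k(p) = p^{k+1}/(1-p)^{2k+1} ∑_{i=0}^{k} D_{k-i,i} pⁱ`. -/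
theorem plateau_gf (k : ℕ) (hk : 1 ≤ k) :
    (1 - PowerSeries.X : PowerSeries ℤ) ^ (4 * k - 2) * PowerSeries.mk (fun m => plateau k m)
      = PowerSeries.X ^ (2 * k) *
          (∑ i ∈ Finset.range k,
            (delannoy (k - 1 - i) i : PowerSeries ℤ) * PowerSeries.X ^ i) ^ 2 := by
  have h42 : 4 * k - 2 = (2 * k - 1) * 2 := by omega
  rw [mk_plateau_eq k hk, h42, pow_mul, ← mul_pow, plateau_gf_key k hk, mul_pow, ← pow_mul,
    mul_comm k 2]
end

section
/- For every integer k ≥ 2, h_{k,k+1} = 4k - 4; that is, the number of column-convex polyominoes with k columns and area k+1 equals 4k-4. -/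
/-- The number of column-convex polyominoes with `k` columns and area `k+1` is `4k-4`. -/
theorem ccPoly_area_width_add_one (k : ℕ) (hk : 2 ≤ k) :
    ccPoly k (k + 1) = 4 * (k : ℤ) - 4 := by
  obtain ⟨m, rfl⟩ : ∃ m, k = m + 2 := ⟨k - 2, by omega⟩
  rw [ccPoly]
  have hsub : Finset.range 2 ⊆ Finset.range (m + 2) := Finset.range_subset_range.2 (by omega)
  rw [← Finset.sum_subset hsub (by
    intro i hi hni
    simp only [Finset.mem_range] at hi hni
    rw [ichoose, if_neg, mul_zero]
    rintro ⟨-, h2⟩; push_cast at h2; omega)]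
  rw [Finset.sum_range_succ, Finset.sum_range_one]
  have h0 : delannoy (m + 2 - 1 - 0) 0 = 1 := by simp [delannoy]
  have h1 : delannoy (m + 2 - 1 - 1) 1 = 2 * m + 1 := by
    simp [delannoy, Finset.sum_range_succ]; omega
  have hi0 : ichoose (((m + 2 + 1 : ℕ) : ℤ) - (0 : ℕ) + ((m + 2 : ℕ) : ℤ) - 2) (2 * ((m + 2 : ℕ) : ℤ) - 2) = 2 * m + 3 := by
    rw [ichoose, if_pos (by push_cast; omega)]
    have ha : ((((m + 2 + 1 : ℕ) : ℤ) - (0 : ℕ) + ((m + 2 : ℕ) : ℤ) - 2)).toNat = 2 * m + 3 := by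
      push_cast; omega
    have hb : ((2 * ((m + 2 : ℕ) : ℤ) - 2)).toNat = 2 * m + 2 := by push_cast; omega
    rw [ha, hb]
    rw [show 2 * m + 3 = (2 * m + 2) + 1 from rfl, Nat.choose_succ_self_right]
    push_cast; ring
  have hi1 : ichoose (((m + 2 + 1 : ℕ) : ℤ) - (1 : ℕ) + ((m + 2 : ℕ) : ℤ) - 2) (2 * ((m + 2 : ℕ) : ℤ) - 2) = 1 := by
    rw [ichoose, if_pos (by push_cast; omega)]
    have ha : ((((m + 2 + 1 : ℕ) : ℤ) - (1 : ℕ) + ((m + 2 : ℕ) : ℤ) - 2)).toNat = 2 * m + 2 := by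
      push_cast; omega
    have hb : ((2 * ((m + 2 : ℕ) : ℤ) - 2)).toNat = 2 * m + 2 := by push_cast; omega
    rw [ha, hb, Nat.choose_self]
    norm_num
  rw [h0, h1, hi0, hi1]
  push_cast; ring
end

section
/- For every integer k ≥ 3, h_{k,k+2} = 8k^2 - 19k + 16; that is, the number of column-convex polyominoes with k columns and area k+2 equals 8k^2 - 19k + 16. -/
lemma ichoose_natCast (a b : ℕ) : ichoose a b = (a.choose b : ℤ) := by
  unfold ichoose
  split_ifs with h
  · simp
  · have : a < b := by omega
    rw [Nat.choose_eq_zero_of_lt this]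
    simp

lemma choose2 (n : ℕ) : (n + 1).choose 2 * 2 = (n + 1) * n := by
  induction n with
  | zero => decide
  | succ n ih =>
    rw [show n + 1 + 1 = (n + 1) + 1 from rfl, Nat.choose_succ_succ, Nat.choose_one_right,
      Nat.add_mul, ih]
    ring

lemma d0 (n : ℕ) : delannoy n 0 = 1 := by simp [delannoy]

lemma d1 (n : ℕ) : delannoy n 1 = 2 * n + 1 := by
  simp [delannoy, Finset.sum_range_succ]
  omega

lemma d2 (n : ℕ) : delannoy n 2 = 2 * n * n + 2 * n + 1 := by
  cases n with
  | zero => decide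
  | succ n =>
    have h : delannoy (n+1) 2 = (n+3).choose 2 + 2*(n+2).choose 2 + (n+1).choose 2 := by
      simp [delannoy, Finset.sum_range_succ]
    have c1 := choose2 (n+2)
    have c2 := choose2 (n+1)
    have c3 := choose2 n
    nlinarith [h]

/-- The number of column-convex polyominoes with `k` columns and area `k+2` is `8k²-19k+16`. -/
theorem ccPoly_area_width_add_two (k : ℕ) (hk : 3 ≤ k) :
    ccPoly k (k + 2) = 8 * (k : ℤ) ^ 2 - 19 * (k : ℤ) + 16 := by
  obtain ⟨m, rfl⟩ : ∃ m, k = m + 3 := ⟨k - 3, by omega⟩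
  unfold ccPoly
  rw [← Finset.sum_subset (Finset.range_subset_range.mpr (by omega : 3 ≤ m + 3))
    (fun i _ hi => ?_)]
  · rw [Finset.sum_range_succ, Finset.sum_range_succ, Finset.sum_range_succ,
      Finset.sum_range_zero]
    have key : ∀ (i a : ℕ), i ≤ 2 → 2 * m + 6 - i = a →
        ichoose (((m + 3 + 2 : ℕ) : ℤ) - (i : ℕ) + ((m + 3 : ℕ) : ℤ) - 2)
          (2 * ((m + 3 : ℕ) : ℤ) - 2) = (a.choose (2 * m + 4) : ℤ) := by
      intro i a hi ha
      rw [show (((m + 3 + 2 : ℕ) : ℤ) - (i : ℕ) + ((m + 3 : ℕ) : ℤ) - 2) = ((a : ℕ) : ℤ) by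
          push_cast; omega,
        show (2 * ((m + 3 : ℕ) : ℤ) - 2) = ((2 * m + 4 : ℕ) : ℤ) by push_cast; ring,
        ichoose_natCast]
    rw [key 0 (2*m+6) (by omega) (by omega), key 1 (2*m+5) (by omega) (by omega),
      key 2 (2*m+4) (by omega) (by omega)]
    have e0 : m + 3 - 1 - 0 = m + 2 := by omega
    have e1 : m + 3 - 1 - 1 = m + 1 := by omega
    have e2 : m + 3 - 1 - 2 = m := by omega
    rw [e0, e1, e2, d0, d1, d2, Nat.choose_self]
    have hs1 : (2*m+6).choose (2*m+4) = (2*m+6).choose 2 := by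
      rw [show 2*m+4 = 2*m+6-2 by omega, Nat.choose_symm (by omega)]
    have hs2 : (2*m+5).choose (2*m+4) = 2*m+5 := by
      rw [show 2*m+4 = 2*m+5-1 by omega, Nat.choose_symm (by omega), Nat.choose_one_right]
    rw [hs1, hs2]
    have hc : ((2*m+6).choose 2 : ℤ) * 2 = (2*(m:ℤ)+6) * (2*(m:ℤ)+5) := by
      have := choose2 (2*m+5)
      rw [show 2*m+5+1 = 2*m+6 by omega] at this
      exact_mod_cast this
    push_cast
    nlinarith [hc]
  · apply mul_eq_zero_of_right
    unfold ichoose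
    rw [if_neg]
    simp only [Finset.mem_range] at hi ⊢
    intro ⟨h1, h2⟩
    push_cast at h2
    omega
end

section
/- For every natural number i, there exists a polynomial P with rational coefficients of degree exactly i and leading coefficient 4^i / i! such that h_{k,k+i} = P(k) for every integer k ≥ i+1. -/
section CCAux
open Polynomial Finset

noncomputable def Apoly (j : ℕ) : Polynomial ℚ :=
  ∑ t ∈ Finset.range (j+1),
    C (j.choose t : ℚ) * (descPochhammer ℚ j).comp (X - C ((t:ℚ)+1))

noncomputable def Bpoly (i j : ℕ) : Polynomial ℚ :=
  (descPochhammer ℚ (i - j)).comp (C 2 * X + C ((i:ℚ) - j - 2))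

lemma Apoly_natDegree_le (j : ℕ) : (Apoly j).natDegree ≤ j := by
  refine natDegree_sum_le_of_forall_le _ _ fun t ht => ?_
  refine (natDegree_C_mul_le _ _).trans ?_
  rw [natDegree_comp, descPochhammer_natDegree, natDegree_X_sub_C, mul_one]

lemma Apoly_coeff (j : ℕ) : (Apoly j).coeff j = 2 ^ j := by
  rw [Apoly, finset_sum_coeff]
  have h : ∀ t ∈ Finset.range (j+1),
      ((C (j.choose t : ℚ) * (descPochhammer ℚ j).comp (X - C ((t:ℚ)+1))).coeff j)
        = (j.choose t : ℚ) := by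
    intro t _
    rw [coeff_C_mul]
    have hm : ((descPochhammer ℚ j).comp (X - C ((t:ℚ)+1))).Monic :=
      (monic_descPochhammer ℚ j).comp_X_sub_C _
    have hd : ((descPochhammer ℚ j).comp (X - C ((t:ℚ)+1))).natDegree = j := by
      rw [natDegree_comp, descPochhammer_natDegree, natDegree_X_sub_C, mul_one]
    have hc := hm.coeff_natDegree
    rw [hd] at hc
    rw [hc, mul_one]
  rw [Finset.sum_congr rfl h, ← Nat.cast_sum, Nat.sum_range_choose]
  push_cast; ring

lemma Bpoly_natDegree (i j : ℕ) : (Bpoly i j).natDegree = i - j := by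
  rw [Bpoly, natDegree_comp, descPochhammer_natDegree, natDegree_linear, mul_one]
  exact two_ne_zero

lemma Bpoly_leadingCoeff (i j : ℕ) : (Bpoly i j).leadingCoeff = 2 ^ (i - j) := by
  rcases eq_or_ne (i - j) 0 with h | h
  · simp [Bpoly, h, descPochhammer_zero]
  · have hq : (C (2:ℚ) * X + C ((i:ℚ) - j - 2)).natDegree = 1 :=
      natDegree_linear two_ne_zero
    have hlc := leadingCoeff_comp (p := descPochhammer ℚ (i - j))
      (q := C (2:ℚ) * X + C ((i:ℚ) - j - 2)) (by rw [hq]; exact one_ne_zero)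
    rw [(monic_descPochhammer ℚ (i-j)).leadingCoeff, leadingCoeff_linear two_ne_zero,
      descPochhammer_natDegree, one_mul] at hlc
    exact hlc

lemma Bpoly_coeff (i j : ℕ) : (Bpoly i j).coeff (i - j) = 2 ^ (i - j) := by
  conv_lhs => rw [← Bpoly_natDegree i j]
  rw [coeff_natDegree, Bpoly_leadingCoeff]

lemma Apoly_natDegree (j : ℕ) : (Apoly j).natDegree = j :=
  le_antisymm (Apoly_natDegree_le j)
    (le_natDegree_of_ne_zero (by rw [Apoly_coeff]; positivity))

lemma Apoly_leadingCoeff (j : ℕ) : (Apoly j).leadingCoeff = 2 ^ j := by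
  rw [leadingCoeff, Apoly_natDegree, Apoly_coeff]


noncomputable def Ppoly (i : ℕ) : Polynomial ℚ :=
  ∑ j ∈ Finset.range (i+1),
    C (1 / (Nat.factorial j * Nat.factorial (i - j) : ℚ)) * (Apoly j * Bpoly i j)

lemma Ppoly_natDegree_le (i : ℕ) : (Ppoly i).natDegree ≤ i := by
  refine natDegree_sum_le_of_forall_le _ _ fun j hj => ?_
  rw [Finset.mem_range] at hj
  refine (natDegree_C_mul_le _ _).trans (natDegree_mul_le.trans ?_)
  rw [Apoly_natDegree, Bpoly_natDegree]
  omega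

lemma Ppoly_coeff (i : ℕ) : (Ppoly i).coeff i = 4 ^ i / (Nat.factorial i : ℚ) := by
  rw [Ppoly, finset_sum_coeff]
  have h : ∀ j ∈ Finset.range (i+1),
      (C (1 / (Nat.factorial j * Nat.factorial (i - j) : ℚ)) * (Apoly j * Bpoly i j)).coeff i
        = (i.choose j : ℚ) * 2 ^ i / (Nat.factorial i : ℚ) := by
    intro j hj
    rw [Finset.mem_range] at hj
    have hji : j ≤ i := by omega
    have hAB : (Apoly j * Bpoly i j).coeff i = 2 ^ i := by
      have h2 := coeff_mul_degree_add_degree (Apoly j) (Bpoly i j)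
      rw [Apoly_natDegree, Bpoly_natDegree, Apoly_leadingCoeff, Bpoly_leadingCoeff,
        ← pow_add, show j + (i - j) = i from by omega] at h2
      exact h2
    rw [coeff_C_mul, hAB]
    have hfac : ((i.choose j : ℚ) * (Nat.factorial j) * (Nat.factorial (i - j))) = (Nat.factorial i : ℚ) := by
      rw [← Nat.cast_mul, ← Nat.cast_mul, Nat.choose_mul_factorial_mul_factorial hji]
    have h1 : (Nat.factorial j : ℚ) ≠ 0 := Nat.cast_ne_zero.2 (Nat.factorial_ne_zero j)
    have h2 : (Nat.factorial (i-j) : ℚ) ≠ 0 := Nat.cast_ne_zero.2 (Nat.factorial_ne_zero _)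
    have h3 : (Nat.factorial i : ℚ) ≠ 0 := Nat.cast_ne_zero.2 (Nat.factorial_ne_zero i)
    field_simp
    linear_combination (-1:ℚ) * hfac
  rw [Finset.sum_congr rfl h]
  rw [← Finset.sum_div]
  congr 1
  rw [← Finset.sum_mul, ← Nat.cast_sum, Nat.sum_range_choose]
  push_cast
  rw [← mul_pow]
  norm_num

lemma Apoly_eval (j k : ℕ) (h : j + 1 ≤ k) :
    (Apoly j).eval (k:ℚ) = (j.factorial : ℚ) * (delannoy (k-1-j) j : ℚ) := by
  rw [Apoly, eval_finset_sum, delannoy, Nat.cast_sum, Finset.mul_sum]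
  refine Finset.sum_congr rfl fun t ht => ?_
  rw [Finset.mem_range] at ht
  rw [eval_mul, eval_C, eval_comp, eval_sub, eval_X, eval_C]
  have harg : (k:ℚ) - ((t:ℚ)+1) = ((k - 1 - t : ℕ) : ℚ) := by
    have h2 : (k - 1 - t : ℕ) = k - (t+1) := by omega
    rw [h2, Nat.cast_sub (by omega)]
    push_cast; ring
  rw [harg, descPochhammer_eval_eq_descFactorial,
    Nat.descFactorial_eq_factorial_mul_choose]
  have h3 : k - 1 - j + j - t = k - 1 - t := by omega
  rw [h3]
  push_cast; ring

lemma Bpoly_eval (i j k : ℕ) (hj : j ≤ i) (hk : 1 ≤ k) :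
    (Bpoly i j).eval (k:ℚ)
      = ((i-j).factorial : ℚ) * ((2*k - 2 + (i - j)).choose (i-j) : ℚ) := by
  rw [Bpoly, eval_comp, eval_add, eval_mul, eval_C, eval_X, eval_C]
  have harg : (2:ℚ) * (k:ℚ) + ((i:ℚ) - (j:ℚ) - 2) = ((2*k - 2 + (i - j) : ℕ) : ℚ) := by
    have h2 : (2*k - 2 + (i - j) : ℕ) + 2 + j = 2*k + i := by omega
    have h3 := congrArg (Nat.cast : ℕ → ℚ) h2
    push_cast at h3 ⊢
    linarith
  rw [harg, descPochhammer_eval_eq_descFactorial,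
    Nat.descFactorial_eq_factorial_mul_choose]
  push_cast; ring

lemma ccPoly_eq (i k : ℕ) (h : i + 1 ≤ k) :
    ccPoly k (k+i) = ∑ j ∈ Finset.range (i+1),
      (delannoy (k-1-j) j : ℤ) * ((2*k - 2 + (i-j)).choose (i-j) : ℤ) := by
  rw [ccPoly, ← Finset.sum_subset (Finset.range_subset_range.2 h) (fun j hjk hj => ?_)]
  · refine Finset.sum_congr rfl fun j hj => ?_
    rw [Finset.mem_range] at hj
    have hcond : (0 ≤ 2*(k:ℤ) - 2 ∧ 2*(k:ℤ) - 2 ≤ (((k+i:ℕ)):ℤ) - j + k - 2) := by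
      push_cast; omega
    rw [ichoose, if_pos hcond]
    congr 1
    have h1 : ((((k+i:ℕ)):ℤ) - j + k - 2).toNat = 2*k - 2 + (i - j) := by
      push_cast; omega
    have h2 : ((2*(k:ℤ) - 2)).toNat = 2*k - 2 := by omega
    rw [h1, h2]
    norm_cast
    have hle : i - j ≤ 2*k - 2 + (i - j) := Nat.le_add_left _ _
    rw [← Nat.choose_symm hle]
    congr 1; omega
  · rw [Finset.mem_range] at hjk
    rw [Finset.mem_range, not_lt] at hj
    have hcond : ¬ (0 ≤ 2*(k:ℤ) - 2 ∧ 2*(k:ℤ) - 2 ≤ (((k+i:ℕ)):ℤ) - j + k - 2) := by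
      push_cast; omega
    rw [ichoose, if_neg hcond, mul_zero]


end CCAux

open Polynomial Finset in
/-- For every `i`, `h_{k,k+i}` is a polynomial in `k` of degree exactly `i` with
leading coefficient `4ⁱ/i!`, for all `k ≥ i+1`. -/
theorem ccPoly_polynomial (i : ℕ) :
    ∃ P : Polynomial ℚ, P.degree = i ∧ P.leadingCoeff = 4 ^ i / (Nat.factorial i : ℚ) ∧
      ∀ k : ℕ, i + 1 ≤ k → (ccPoly k (k + i) : ℚ) = P.eval (k : ℚ) := by
  have hc := Ppoly_coeff i
  have hcne : (Ppoly i).coeff i ≠ 0 := by rw [hc]; positivity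
  have hnd : (Ppoly i).natDegree = i :=
    le_antisymm (Ppoly_natDegree_le i) (le_natDegree_of_ne_zero hcne)
  have hne : Ppoly i ≠ 0 := fun h0 => by rw [h0, coeff_zero] at hcne; exact hcne rfl
  refine ⟨Ppoly i, ?_, ?_, ?_⟩
  · rw [degree_eq_natDegree hne, hnd]
  · rw [leadingCoeff, hnd, hc]
  · intro k hk
    rw [ccPoly_eq i k hk]
    push_cast
    rw [Ppoly, eval_finset_sum]
    refine Finset.sum_congr rfl fun j hj => ?_
    rw [Finset.mem_range] at hj
    rw [eval_mul, eval_C, eval_mul, Apoly_eval j k (by omega),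
      Bpoly_eval i j k (by omega) (by omega)]
    have h1 : (Nat.factorial j : ℚ) ≠ 0 := Nat.cast_ne_zero.2 (Nat.factorial_ne_zero j)
    have h2 : (Nat.factorial (i-j) : ℚ) ≠ 0 := Nat.cast_ne_zero.2 (Nat.factorial_ne_zero _)
    field_simp
end

section
/- For every integer k ≥ 4, h_{k,k+3} = (32/3)k^3 - 44k^2 + (268/3)k - 76 (equivalently, 3·h_{k,k+3} = 32k^3 - 132k^2 + 268k - 228). -/
lemma cast_choose_two (n : ℕ) : ((n.choose 2 : ℕ) : ℚ) = n * (n - 1) / 2 := by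
  induction n with
  | zero => norm_num
  | succ n ih =>
    rw [Nat.choose_succ_succ]
    push_cast [Nat.choose_one_right, ih]
    ring

lemma cast_choose_three (n : ℕ) : ((n.choose 3 : ℕ) : ℚ) = n * (n - 1) * (n - 2) / 6 := by
  induction n with
  | zero => norm_num
  | succ n ih =>
    rw [Nat.choose_succ_succ]
    push_cast [cast_choose_two, ih]
    ring

lemma ichoose_coe (a b : ℕ) (h : b ≤ a) : ichoose a b = (a.choose b : ℤ) := by
  simp [ichoose, h]

theorem ccPoly_area_width_add_three (k : ℕ) (hk : 4 ≤ k) :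
    (ccPoly k (k + 3) : ℚ)
      = 32 / 3 * (k : ℚ) ^ 3 - 44 * (k : ℚ) ^ 2 + 268 / 3 * (k : ℚ) - 76 := by
  obtain ⟨m, rfl⟩ : ∃ m, k = m + 4 := ⟨k - 4, by omega⟩
  have hsum : ccPoly (m + 4) (m + 4 + 3)
      = ∑ i ∈ Finset.range 4, (delannoy (m + 4 - 1 - i) i : ℤ) *
          ichoose (((m + 4 + 3 : ℕ) : ℤ) - i + ((m + 4 : ℕ) : ℤ) - 2)
            (2 * ((m + 4 : ℕ) : ℤ) - 2) := by
    rw [ccPoly]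
    refine (Finset.sum_subset ?_ ?_).symm
    · intro x hx; simp only [Finset.mem_range] at hx ⊢; omega
    · intro i hi hni
      simp only [Finset.mem_range] at hi hni
      have hc : ¬ ((0:ℤ) ≤ 2 * ((m + 4 : ℕ) : ℤ) - 2 ∧
          2 * ((m + 4 : ℕ) : ℤ) - 2 ≤ ((m + 4 + 3 : ℕ) : ℤ) - i + ((m + 4 : ℕ) : ℤ) - 2) := by
        push_cast; omega
      unfold ichoose
      rw [if_neg hc, mul_zero]
  rw [hsum]
  rw [Finset.sum_range_succ, Finset.sum_range_succ, Finset.sum_range_succ,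
    Finset.sum_range_one]
  have e0 : (((m + 4 + 3 : ℕ) : ℤ) - (0:ℕ) + ((m + 4 : ℕ) : ℤ) - 2) = ((2*m+9 : ℕ) : ℤ) := by
    push_cast; omega
  have e1 : (((m + 4 + 3 : ℕ) : ℤ) - (1:ℕ) + ((m + 4 : ℕ) : ℤ) - 2) = ((2*m+8 : ℕ) : ℤ) := by
    push_cast; omega
  have e2 : (((m + 4 + 3 : ℕ) : ℤ) - (2:ℕ) + ((m + 4 : ℕ) : ℤ) - 2) = ((2*m+7 : ℕ) : ℤ) := by
    push_cast; omega
  have e3 : (((m + 4 + 3 : ℕ) : ℤ) - (3:ℕ) + ((m + 4 : ℕ) : ℤ) - 2) = ((2*m+6 : ℕ) : ℤ) := by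
    push_cast; omega
  have eb : (2 * ((m + 4 : ℕ) : ℤ) - 2) = ((2*m+6 : ℕ) : ℤ) := by push_cast; omega
  rw [e0, e1, e2, e3, eb,
    ichoose_coe _ _ (by omega), ichoose_coe _ _ (by omega),
    ichoose_coe _ _ (by omega), ichoose_coe _ _ (by omega)]
  have symmgen : ∀ a b c : ℕ, b ≤ a → a - b = c → a.choose c = a.choose b := by
    intro a b c hba hc; rw [← hc, Nat.choose_symm hba]
  have s0 : (2*m+9).choose (2*m+6) = (2*m+9).choose 3 :=
    symmgen _ 3 _ (by omega) (by omega)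
  have s1 : (2*m+8).choose (2*m+6) = (2*m+8).choose 2 :=
    symmgen _ 2 _ (by omega) (by omega)
  have s2 : (2*m+7).choose (2*m+6) = (2*m+7) := by
    rw [symmgen _ 1 _ (by omega) (by omega), Nat.choose_one_right]
  have s3 : (2*m+6).choose (2*m+6) = 1 := Nat.choose_self _
  have hd0 : delannoy (m + 4 - 1 - 0) 0 = 1 := by simp [delannoy]
  have hd1 : delannoy (m + 4 - 1 - 1) 1 = 2*m+5 := by
    have : m + 4 - 1 - 1 = m + 2 := by omega
    rw [this]
    simp [delannoy, Finset.sum_range_succ]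
    omega
  have hd2 : delannoy (m + 4 - 1 - 2) 2
      = (m+3).choose 2 + 2 * (m+2).choose 2 + (m+1).choose 2 := by
    have : m + 4 - 1 - 2 = m + 1 := by omega
    rw [this]
    simp [delannoy, Finset.sum_range_succ, Nat.choose]
    try ring_nf
  have hd3 : delannoy (m + 4 - 1 - 3) 3
      = (m+3).choose 3 + 3 * (m+2).choose 3 + 3 * (m+1).choose 3 + m.choose 3 := by
    have : m + 4 - 1 - 3 = m := by omega
    rw [this]
    simp [delannoy, Finset.sum_range_succ, Nat.choose]
    try ring_nf
  rw [s0, s1, s2, s3, hd0, hd1, hd2, hd3]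
  push_cast [cast_choose_two, cast_choose_three]
  ring
end

section
/- The numbers r_{k,m} of plateau polycubes of width k and lateral area m satisfy: (1) r_{k,2k+3} = (256/3)k^3 - 304k^2 + (1376/3)k - 280 for every integer k ≥ 4; (2) r_{k,2k+4} = (512/3)k^4 - (2624/3)k^3 + (6454/3)k^2 - (8509/3)k + 1632 for every integer k ≥ 5; (3) r_{k,2k+5} = (4096/15)k^5 - (5632/3)k^4 + (19888/3)k^3 - (42104/3)k^2 + (85888/5)k - 9512 for every integer k ≥ 6; (4) r_{k,2k+6} = (16384/45)k^6 - (48128/15)k^5 + (136256/9)k^4 - 45444k^3 + (3971986/45)k^2 - (1543582/15)k + 55440 for every integer k ≥ 7. -/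
lemma cQ0 (a : ℕ) : ((a.choose 0 : ℕ) : ℚ) = 1 := by simp

lemma cQ1 (a : ℕ) : ((a.choose 1 : ℕ) : ℚ) = a := by simp

lemma cQ2 : ∀ a : ℕ, ((a.choose 2 : ℕ) : ℚ) = ((a:ℚ) * ((a:ℚ) - 1)) / 2 := by
  intro a
  induction a with
  | zero => simp
  | succ n ih =>
    rw [show (n+1).choose 2 = n.choose 1 + n.choose 2 from Nat.choose_succ_succ n 1,
      Nat.cast_add, ih, cQ1]
    push_cast
    ring

lemma cQ3 : ∀ a : ℕ, ((a.choose 3 : ℕ) : ℚ) = ((a:ℚ) * ((a:ℚ) - 1) * ((a:ℚ) - 2)) / 6 := by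
  intro a
  induction a with
  | zero => simp
  | succ n ih =>
    rw [show (n+1).choose 3 = n.choose 2 + n.choose 3 from Nat.choose_succ_succ n 2,
      Nat.cast_add, ih, cQ2]
    push_cast
    ring

lemma cQ4 : ∀ a : ℕ, ((a.choose 4 : ℕ) : ℚ) = ((a:ℚ) * ((a:ℚ) - 1) * ((a:ℚ) - 2) * ((a:ℚ) - 3)) / 24 := by
  intro a
  induction a with
  | zero => simp
  | succ n ih =>
    rw [show (n+1).choose 4 = n.choose 3 + n.choose 4 from Nat.choose_succ_succ n 3,
      Nat.cast_add, ih, cQ3]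
    push_cast
    ring

lemma cQ5 : ∀ a : ℕ, ((a.choose 5 : ℕ) : ℚ) = ((a:ℚ) * ((a:ℚ) - 1) * ((a:ℚ) - 2) * ((a:ℚ) - 3) * ((a:ℚ) - 4)) / 120 := by
  intro a
  induction a with
  | zero => simp
  | succ n ih =>
    rw [show (n+1).choose 5 = n.choose 4 + n.choose 5 from Nat.choose_succ_succ n 4,
      Nat.cast_add, ih, cQ4]
    push_cast
    ring

lemma cQ6 : ∀ a : ℕ, ((a.choose 6 : ℕ) : ℚ) = ((a:ℚ) * ((a:ℚ) - 1) * ((a:ℚ) - 2) * ((a:ℚ) - 3) * ((a:ℚ) - 4) * ((a:ℚ) - 5)) / 720 := by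
  intro a
  induction a with
  | zero => simp
  | succ n ih =>
    rw [show (n+1).choose 6 = n.choose 5 + n.choose 6 from Nat.choose_succ_succ n 5,
      Nat.cast_add, ih, cQ5]
    push_cast
    ring

lemma DQ0 (n : ℕ) : ((delannoy n 0 : ℕ) : ℚ) = 1 := by
  unfold delannoy
  simp only [Finset.sum_range_succ, Finset.sum_range_zero]
  push_cast
  simp only [cQ0]
  push_cast
  ring

lemma DQ1 (n : ℕ) : ((delannoy n 1 : ℕ) : ℚ) = 1 + 2 * (n:ℚ) := by
  unfold delannoy
  simp only [Finset.sum_range_succ, Finset.sum_range_zero]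
  rw [show n + 1 - 1 = n + 0 from by omega]
  push_cast
  simp only [cQ0, cQ1]
  push_cast
  ring

lemma DQ2 (n : ℕ) : ((delannoy n 2 : ℕ) : ℚ) = 1 + 2 * (n:ℚ) + 2 * (n:ℚ) ^ 2 := by
  unfold delannoy
  simp only [Finset.sum_range_succ, Finset.sum_range_zero]
  rw [show n + 2 - 1 = n + 1 from by omega,
      show n + 2 - 2 = n + 0 from by omega]
  push_cast
  simp only [cQ0, cQ1, cQ2]
  push_cast
  ring

lemma DQ3 (n : ℕ) : ((delannoy n 3 : ℕ) : ℚ) = 1 + (8 / 3) * (n:ℚ) + 2 * (n:ℚ) ^ 2 + (4 / 3) * (n:ℚ) ^ 3 := by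
  unfold delannoy
  simp only [Finset.sum_range_succ, Finset.sum_range_zero]
  rw [show n + 3 - 1 = n + 2 from by omega,
      show n + 3 - 2 = n + 1 from by omega,
      show n + 3 - 3 = n + 0 from by omega]
  push_cast
  simp only [cQ0, cQ1, cQ2, cQ3]
  push_cast
  ring

lemma DQ4 (n : ℕ) : ((delannoy n 4 : ℕ) : ℚ) = 1 + (8 / 3) * (n:ℚ) + (10 / 3) * (n:ℚ) ^ 2 + (4 / 3) * (n:ℚ) ^ 3 + (2 / 3) * (n:ℚ) ^ 4 := by
  unfold delannoy
  simp only [Finset.sum_range_succ, Finset.sum_range_zero]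
  rw [show n + 4 - 1 = n + 3 from by omega,
      show n + 4 - 2 = n + 2 from by omega,
      show n + 4 - 3 = n + 1 from by omega,
      show n + 4 - 4 = n + 0 from by omega]
  push_cast
  simp only [cQ0, cQ1, cQ2, cQ3, cQ4]
  push_cast
  ring

lemma DQ5 (n : ℕ) : ((delannoy n 5 : ℕ) : ℚ) = 1 + (46 / 15) * (n:ℚ) + (10 / 3) * (n:ℚ) ^ 2 + (8 / 3) * (n:ℚ) ^ 3 + (2 / 3) * (n:ℚ) ^ 4 + (4 / 15) * (n:ℚ) ^ 5 := by
  unfold delannoy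
  simp only [Finset.sum_range_succ, Finset.sum_range_zero]
  rw [show n + 5 - 1 = n + 4 from by omega,
      show n + 5 - 2 = n + 3 from by omega,
      show n + 5 - 3 = n + 2 from by omega,
      show n + 5 - 4 = n + 1 from by omega,
      show n + 5 - 5 = n + 0 from by omega]
  push_cast
  simp only [cQ0, cQ1, cQ2, cQ3, cQ4, cQ5]
  push_cast
  ring

lemma DQ6 (n : ℕ) : ((delannoy n 6 : ℕ) : ℚ) = 1 + (46 / 15) * (n:ℚ) + (196 / 45) * (n:ℚ) ^ 2 + (8 / 3) * (n:ℚ) ^ 3 + (14 / 9) * (n:ℚ) ^ 4 + (4 / 15) * (n:ℚ) ^ 5 + (4 / 45) * (n:ℚ) ^ 6 := by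
  unfold delannoy
  simp only [Finset.sum_range_succ, Finset.sum_range_zero]
  rw [show n + 6 - 1 = n + 5 from by omega,
      show n + 6 - 2 = n + 4 from by omega,
      show n + 6 - 3 = n + 3 from by omega,
      show n + 6 - 4 = n + 2 from by omega,
      show n + 6 - 5 = n + 1 from by omega,
      show n + 6 - 6 = n + 0 from by omega]
  push_cast
  simp only [cQ0, cQ1, cQ2, cQ3, cQ4, cQ5, cQ6]
  push_cast
  ring

lemma izero {a b : ℤ} (h : a < b) : ichoose a b = 0 := by
  unfold ichoose
  rw [if_neg]
  rintro ⟨h1, h2⟩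
  omega

lemma ichooseQ (a s : ℕ) : ichoose ((a : ℤ) + (s : ℤ)) (a : ℤ) = ((a + s).choose s : ℤ) := by
  unfold ichoose
  rw [if_pos (by omega : (0:ℤ) ≤ (a:ℤ) ∧ (a:ℤ) ≤ (a:ℤ) + (s:ℤ))]
  have h1 : ((a:ℤ) + (s:ℤ)).toNat = a + s := by omega
  have h2 : ((a:ℤ)).toNat = a := by omega
  rw [h1, h2]
  have h3 := Nat.choose_symm (show s ≤ a + s from Nat.le_add_left s a)
  rw [Nat.add_sub_cancel] at h3
  rw [h3]

lemma ccPoly_eval (t b : ℕ) :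
    ccPoly (t+1+b) (t+1+b+t) = ∑ i ∈ Finset.range (t+1),
      (delannoy (t+b-i) i : ℤ) * ((2*(t+b) + (t-i)).choose (t-i) : ℤ) := by
  unfold ccPoly
  rw [← Finset.sum_subset (Finset.range_subset_range.2 (show t+1 ≤ t+1+b by omega))
      (by
        intro x hx hx'
        simp only [Finset.mem_range] at hx hx'
        rw [izero (by omega), mul_zero])]
  refine Finset.sum_congr rfl ?_
  intro i hi
  simp only [Finset.mem_range] at hi
  rw [show t+1+b-1-i = t+b-i from by omega,
    show (2 * ((t+1+b : ℕ) : ℤ) - 2) = ((2*(t+b) : ℕ) : ℤ) from by omega,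
    show ((t+1+b+t : ℕ) : ℤ) - (i : ℤ) + ((t+1+b : ℕ) : ℤ) - 2
        = ((2*(t+b) : ℕ) : ℤ) + ((t-i : ℕ) : ℤ) from by omega,
    ichooseQ]

lemma hQ0 (k : ℕ) (hk : 0+1 ≤ k) :
    ((ccPoly k (k+0) : ℤ) : ℚ) = 1 := by
  obtain ⟨b, rfl⟩ := Nat.exists_eq_add_of_le hk
  rw [ccPoly_eval 0 b]
  simp only [Finset.sum_range_succ, Finset.sum_range_zero]
  rw [show 0+b-0 = b + 0 from by omega,
    show 0-0 = 0 from by omega,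
    show 2*(0+b) + 0 = 2*b + 0 from by omega]
  push_cast
  simp only [DQ0]
  simp only [cQ0]
  push_cast
  ring

lemma hQ1 (k : ℕ) (hk : 1+1 ≤ k) :
    ((ccPoly k (k+1) : ℤ) : ℚ) = (-4) + 4 * (k:ℚ) := by
  obtain ⟨b, rfl⟩ := Nat.exists_eq_add_of_le hk
  rw [ccPoly_eval 1 b]
  simp only [Finset.sum_range_succ, Finset.sum_range_zero]
  rw [show 1+b-0 = b + 1 from by omega,
    show 1-0 = 1 from by omega,
    show 2*(1+b) + 1 = 2*b + 3 from by omega,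
    show 1+b-1 = b + 0 from by omega,
    show 1-1 = 0 from by omega,
    show 2*(1+b) + 0 = 2*b + 2 from by omega]
  push_cast
  simp only [DQ0, DQ1]
  simp only [cQ0, cQ1]
  push_cast
  ring

lemma hQ2 (k : ℕ) (hk : 2+1 ≤ k) :
    ((ccPoly k (k+2) : ℤ) : ℚ) = 16 + (-19) * (k:ℚ) + 8 * (k:ℚ) ^ 2 := by
  obtain ⟨b, rfl⟩ := Nat.exists_eq_add_of_le hk
  rw [ccPoly_eval 2 b]
  simp only [Finset.sum_range_succ, Finset.sum_range_zero]
  rw [show 2+b-0 = b + 2 from by omega,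
    show 2-0 = 2 from by omega,
    show 2*(2+b) + 2 = 2*b + 6 from by omega,
    show 2+b-1 = b + 1 from by omega,
    show 2-1 = 1 from by omega,
    show 2*(2+b) + 1 = 2*b + 5 from by omega,
    show 2+b-2 = b + 0 from by omega,
    show 2-2 = 0 from by omega,
    show 2*(2+b) + 0 = 2*b + 4 from by omega]
  push_cast
  simp only [DQ0, DQ1, DQ2]
  simp only [cQ0, cQ1, cQ2]
  push_cast
  ring

lemma hQ3 (k : ℕ) (hk : 3+1 ≤ k) :
    ((ccPoly k (k+3) : ℤ) : ℚ) = (-76) + (268 / 3) * (k:ℚ) + (-44) * (k:ℚ) ^ 2 + (32 / 3) * (k:ℚ) ^ 3 := by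
  obtain ⟨b, rfl⟩ := Nat.exists_eq_add_of_le hk
  rw [ccPoly_eval 3 b]
  simp only [Finset.sum_range_succ, Finset.sum_range_zero]
  rw [show 3+b-0 = b + 3 from by omega,
    show 3-0 = 3 from by omega,
    show 2*(3+b) + 3 = 2*b + 9 from by omega,
    show 3+b-1 = b + 2 from by omega,
    show 3-1 = 2 from by omega,
    show 2*(3+b) + 2 = 2*b + 8 from by omega,
    show 3+b-2 = b + 1 from by omega,
    show 3-2 = 1 from by omega,
    show 2*(3+b) + 1 = 2*b + 7 from by omega,
    show 3+b-3 = b + 0 from by omega,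
    show 3-3 = 0 from by omega,
    show 2*(3+b) + 0 = 2*b + 6 from by omega]
  push_cast
  simp only [DQ0, DQ1, DQ2, DQ3]
  simp only [cQ0, cQ1, cQ2, cQ3]
  push_cast
  ring

lemma hQ4 (k : ℕ) (hk : 4+1 ≤ k) :
    ((ccPoly k (k+4) : ℤ) : ℚ) = 384 + (-2717 / 6) * (k:ℚ) + (1403 / 6) * (k:ℚ) ^ 2 + (-200 / 3) * (k:ℚ) ^ 3 + (32 / 3) * (k:ℚ) ^ 4 := by
  obtain ⟨b, rfl⟩ := Nat.exists_eq_add_of_le hk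
  rw [ccPoly_eval 4 b]
  simp only [Finset.sum_range_succ, Finset.sum_range_zero]
  rw [show 4+b-0 = b + 4 from by omega,
    show 4-0 = 4 from by omega,
    show 2*(4+b) + 4 = 2*b + 12 from by omega,
    show 4+b-1 = b + 3 from by omega,
    show 4-1 = 3 from by omega,
    show 2*(4+b) + 3 = 2*b + 11 from by omega,
    show 4+b-2 = b + 2 from by omega,
    show 4-2 = 2 from by omega,
    show 2*(4+b) + 2 = 2*b + 10 from by omega,
    show 4+b-3 = b + 1 from by omega,
    show 4-3 = 1 from by omega,
    show 2*(4+b) + 1 = 2*b + 9 from by omega,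
    show 4+b-4 = b + 0 from by omega,
    show 4-4 = 0 from by omega,
    show 2*(4+b) + 0 = 2*b + 8 from by omega]
  push_cast
  simp only [DQ0, DQ1, DQ2, DQ3, DQ4]
  simp only [cQ0, cQ1, cQ2, cQ3, cQ4]
  push_cast
  ring

lemma hQ5 (k : ℕ) (hk : 5+1 ≤ k) :
    ((ccPoly k (k+5) : ℤ) : ℚ) = (-2004) + (35522 / 15) * (k:ℚ) + (-3784 / 3) * (k:ℚ) ^ 2 + (1174 / 3) * (k:ℚ) ^ 3 + (-224 / 3) * (k:ℚ) ^ 4 + (128 / 15) * (k:ℚ) ^ 5 := by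
  obtain ⟨b, rfl⟩ := Nat.exists_eq_add_of_le hk
  rw [ccPoly_eval 5 b]
  simp only [Finset.sum_range_succ, Finset.sum_range_zero]
  rw [show 5+b-0 = b + 5 from by omega,
    show 5-0 = 5 from by omega,
    show 2*(5+b) + 5 = 2*b + 15 from by omega,
    show 5+b-1 = b + 4 from by omega,
    show 5-1 = 4 from by omega,
    show 2*(5+b) + 4 = 2*b + 14 from by omega,
    show 5+b-2 = b + 3 from by omega,
    show 5-2 = 3 from by omega,
    show 2*(5+b) + 3 = 2*b + 13 from by omega,
    show 5+b-3 = b + 2 from by omega,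
    show 5-3 = 2 from by omega,
    show 2*(5+b) + 2 = 2*b + 12 from by omega,
    show 5+b-4 = b + 1 from by omega,
    show 5-4 = 1 from by omega,
    show 2*(5+b) + 1 = 2*b + 11 from by omega,
    show 5+b-5 = b + 0 from by omega,
    show 5-5 = 0 from by omega,
    show 2*(5+b) + 0 = 2*b + 10 from by omega]
  push_cast
  simp only [DQ0, DQ1, DQ2, DQ3, DQ4, DQ5]
  simp only [cQ0, cQ1, cQ2, cQ3, cQ4, cQ5]
  push_cast
  ring

lemma hQ6 (k : ℕ) (hk : 6+1 ≤ k) :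
    ((ccPoly k (k+6) : ℤ) : ℚ) = 10672 + (-189503 / 15) * (k:ℚ) + (617753 / 90) * (k:ℚ) ^ 2 + (-13427 / 6) * (k:ℚ) ^ 3 + (4292 / 9) * (k:ℚ) ^ 4 + (-992 / 15) * (k:ℚ) ^ 5 + (256 / 45) * (k:ℚ) ^ 6 := by
  obtain ⟨b, rfl⟩ := Nat.exists_eq_add_of_le hk
  rw [ccPoly_eval 6 b]
  simp only [Finset.sum_range_succ, Finset.sum_range_zero]
  rw [show 6+b-0 = b + 6 from by omega,
    show 6-0 = 6 from by omega,
    show 2*(6+b) + 6 = 2*b + 18 from by omega,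
    show 6+b-1 = b + 5 from by omega,
    show 6-1 = 5 from by omega,
    show 2*(6+b) + 5 = 2*b + 17 from by omega,
    show 6+b-2 = b + 4 from by omega,
    show 6-2 = 4 from by omega,
    show 2*(6+b) + 4 = 2*b + 16 from by omega,
    show 6+b-3 = b + 3 from by omega,
    show 6-3 = 3 from by omega,
    show 2*(6+b) + 3 = 2*b + 15 from by omega,
    show 6+b-4 = b + 2 from by omega,
    show 6-4 = 2 from by omega,
    show 2*(6+b) + 2 = 2*b + 14 from by omega,
    show 6+b-5 = b + 1 from by omega,
    show 6-5 = 1 from by omega,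
    show 2*(6+b) + 1 = 2*b + 13 from by omega,
    show 6+b-6 = b + 0 from by omega,
    show 6-6 = 0 from by omega,
    show 2*(6+b) + 0 = 2*b + 12 from by omega]
  push_cast
  simp only [DQ0, DQ1, DQ2, DQ3, DQ4, DQ5, DQ6]
  simp only [cQ0, cQ1, cQ2, cQ3, cQ4, cQ5, cQ6]
  push_cast
  ring


/-- Polynomial expressions for `r_{k,2k+i}` for `i = 3, 4, 5, 6`. -/
theorem plateau_higher_values :
    (∀ k : ℕ, 4 ≤ k → (plateau k (2 * k + 3) : ℚ)
        = 256 / 3 * (k : ℚ) ^ 3 - 304 * (k : ℚ) ^ 2 + 1376 / 3 * (k : ℚ) - 280) ∧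
    (∀ k : ℕ, 5 ≤ k → (plateau k (2 * k + 4) : ℚ)
        = 512 / 3 * (k : ℚ) ^ 4 - 2624 / 3 * (k : ℚ) ^ 3 + 6454 / 3 * (k : ℚ) ^ 2
            - 8509 / 3 * (k : ℚ) + 1632) ∧
    (∀ k : ℕ, 6 ≤ k → (plateau k (2 * k + 5) : ℚ)
        = 4096 / 15 * (k : ℚ) ^ 5 - 5632 / 3 * (k : ℚ) ^ 4 + 19888 / 3 * (k : ℚ) ^ 3
            - 42104 / 3 * (k : ℚ) ^ 2 + 85888 / 5 * (k : ℚ) - 9512) ∧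
    (∀ k : ℕ, 7 ≤ k → (plateau k (2 * k + 6) : ℚ)
        = 16384 / 45 * (k : ℚ) ^ 6 - 48128 / 15 * (k : ℚ) ^ 5 + 136256 / 9 * (k : ℚ) ^ 4
            - 45444 * (k : ℚ) ^ 3 + 3971986 / 45 * (k : ℚ) ^ 2 - 1543582 / 15 * (k : ℚ)
            + 55440) := by
  refine ⟨?_, ?_, ?_, ?_⟩
  · intro k hk
    unfold plateau
    rw [show 2*k+3 - k = k + 3 from by omega,
      show Finset.Icc k (k+3) = Finset.Ico k (k+3+1) from (Finset.Ico_add_one_right_eq_Icc k (k+3)).symm,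
      Finset.sum_Ico_eq_sum_range,
      show k+3+1-k = 3+1 from by omega]
    simp only [Finset.sum_range_succ, Finset.sum_range_zero]
    rw [show 2*k+3 - (k+0) = k + 3 from by omega, show 2*k+3 - (k+1) = k + 2 from by omega, show 2*k+3 - (k+2) = k + 1 from by omega, show 2*k+3 - (k+3) = k + 0 from by omega]
    push_cast
    rw [hQ0 k (by omega),
    hQ1 k (by omega),
    hQ2 k (by omega),
    hQ3 k (by omega)]
    ring
  · intro k hk
    unfold plateau
    rw [show 2*k+4 - k = k + 4 from by omega,
      show Finset.Icc k (k+4) = Finset.Ico k (k+4+1) from (Finset.Ico_add_one_right_eq_Icc k (k+4)).symm,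
      Finset.sum_Ico_eq_sum_range,
      show k+4+1-k = 4+1 from by omega]
    simp only [Finset.sum_range_succ, Finset.sum_range_zero]
    rw [show 2*k+4 - (k+0) = k + 4 from by omega, show 2*k+4 - (k+1) = k + 3 from by omega, show 2*k+4 - (k+2) = k + 2 from by omega, show 2*k+4 - (k+3) = k + 1 from by omega, show 2*k+4 - (k+4) = k + 0 from by omega]
    push_cast
    rw [hQ0 k (by omega),
    hQ1 k (by omega),
    hQ2 k (by omega),
    hQ3 k (by omega),
    hQ4 k (by omega)]
    ring
  · intro k hk
    unfold plateau
    rw [show 2*k+5 - k = k + 5 from by omega,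
      show Finset.Icc k (k+5) = Finset.Ico k (k+5+1) from (Finset.Ico_add_one_right_eq_Icc k (k+5)).symm,
      Finset.sum_Ico_eq_sum_range,
      show k+5+1-k = 5+1 from by omega]
    simp only [Finset.sum_range_succ, Finset.sum_range_zero]
    rw [show 2*k+5 - (k+0) = k + 5 from by omega, show 2*k+5 - (k+1) = k + 4 from by omega, show 2*k+5 - (k+2) = k + 3 from by omega, show 2*k+5 - (k+3) = k + 2 from by omega, show 2*k+5 - (k+4) = k + 1 from by omega, show 2*k+5 - (k+5) = k + 0 from by omega]
    push_cast
    rw [hQ0 k (by omega),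
    hQ1 k (by omega),
    hQ2 k (by omega),
    hQ3 k (by omega),
    hQ4 k (by omega),
    hQ5 k (by omega)]
    ring
  · intro k hk
    unfold plateau
    rw [show 2*k+6 - k = k + 6 from by omega,
      show Finset.Icc k (k+6) = Finset.Ico k (k+6+1) from (Finset.Ico_add_one_right_eq_Icc k (k+6)).symm,
      Finset.sum_Ico_eq_sum_range,
      show k+6+1-k = 6+1 from by omega]
    simp only [Finset.sum_range_succ, Finset.sum_range_zero]
    rw [show 2*k+6 - (k+0) = k + 6 from by omega, show 2*k+6 - (k+1) = k + 5 from by omega, show 2*k+6 - (k+2) = k + 4 from by omega, show 2*k+6 - (k+3) = k + 3 from by omega, show 2*k+6 - (k+4) = k + 2 from by omega, show 2*k+6 - (k+5) = k + 1 from by omega, show 2*k+6 - (k+6) = k + 0 from by omega]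
    push_cast
    rw [hQ0 k (by omega),
    hQ1 k (by omega),
    hQ2 k (by omega),
    hQ3 k (by omega),
    hQ4 k (by omega),
    hQ5 k (by omega),
    hQ6 k (by omega)]
    ring
end
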